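/- Let ℓ > 0 and α > 0 and let μ be the standard Gaussian measure on ℝ. Then for every integer m ≥ 0 the eigenfunctions φ_n of the Gaussian kernel satisfy ∫_ℝ φ_{2m+1} dμ = 0 and ∫_ℝ φ_{2m} dμ = (β/(1+2δ²))^{1/2} · (√((2m)!)/(2^m · m!)) · (2α²β²/(1+2δ²) − 1)^m. -/

import Mathlib

open MeasureTheory ProbabilityTheory

/-- Probabilists' Hermite polynomial evaluated at a real number. -/
noncomputable def H (n : ℕ) (x : ℝ) : ℝ := Polynomial.aeval x (Polynomial.hermite n)

/-- The standard Gaussian measure on ℝ. -/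
noncomputable def stdGauss : Measure ℝ := gaussianReal 0 1

section Aux
open Polynomial Real

/-- The probabilists' Hermite polynomial as a real polynomial. -/
noncomputable def PR (n : ℕ) : Polynomial ℝ := (Polynomial.hermite n).map (Int.castRingHom ℝ)

lemma PR_zero : PR 0 = 1 := by simp [PR, hermite_zero]
lemma PR_one : PR 1 = X := by simp [PR, hermite_one]
lemma PR_succ (n : ℕ) : PR (n+1) = X * PR n - derivative (PR n) := by
  simp [PR, hermite_succ, Polynomial.derivative_map]

lemma derivative_PR (n : ℕ) : derivative (PR (n+1)) = ((n : Polynomial ℝ)+1) * PR n := by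
  induction n with
  | zero => simp [PR_one, PR_zero]
  | succ n ih =>
    rw [PR_succ (n+1), derivative_sub, derivative_mul, derivative_X, ih]
    rw [derivative_mul, PR_succ n]
    have : derivative ((n : Polynomial ℝ)+1) = 0 := by simp
    rw [this]
    push_cast
    ring

lemma PR_aeval (n : ℕ) (t : ℝ) : (Polynomial.aeval t (Polynomial.hermite n) : ℝ) = (PR n).eval t := by
  rw [PR, Polynomial.eval_map, Polynomial.aeval_def]
  norm_num

lemma integrable_pow_gauss {a : ℝ} (ha : 0 < a) (n : ℕ) :
    Integrable (fun x : ℝ => x ^ n * Real.exp (-(a * x ^ 2) / 2)) := by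
  have h2 : 0 < a / 2 := by positivity
  have h := integrable_rpow_mul_exp_neg_mul_sq h2
    (s := (n : ℝ)) (lt_of_lt_of_le neg_one_lt_zero (Nat.cast_nonneg n))
  simp_rw [Real.rpow_natCast] at h
  convert h using 2 with x
  congr 1
  ring

lemma integrable_poly_gauss {a : ℝ} (ha : 0 < a) (p : Polynomial ℝ) :
    Integrable (fun x : ℝ => p.eval x * Real.exp (-(a * x ^ 2) / 2)) := by
  induction p using Polynomial.induction_on' with
  | add p q hp hq =>
    exact (hp.add hq).congr (Filter.Eventually.of_forall fun x => by simp [add_mul])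
  | monomial n t =>
    exact ((integrable_pow_gauss ha n).const_mul t).congr
      (Filter.Eventually.of_forall fun x => by simp [eval_monomial]; ring)

/-- The integral of a polynomial against an unnormalized Gaussian weight. -/
noncomputable def Ig (a : ℝ) (p : Polynomial ℝ) : ℝ :=
  ∫ x : ℝ, p.eval x * Real.exp (-(a * x ^ 2) / 2)

lemma Ig_sub {a : ℝ} (ha : 0 < a) (p q : Polynomial ℝ) :
    Ig a (p - q) = Ig a p - Ig a q := by
  rw [Ig, Ig, Ig, ← integral_sub (integrable_poly_gauss ha p) (integrable_poly_gauss ha q)]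
  congr 1; funext x; simp [sub_mul]

lemma Ig_C_mul (a c : ℝ) (p : Polynomial ℝ) : Ig a (C c * p) = c * Ig a p := by
  rw [Ig, Ig, ← MeasureTheory.integral_const_mul]
  congr 1; funext x; simp; ring

lemma Ig_zero (a : ℝ) : Ig a 0 = 0 := by simp [Ig]

lemma Ig_stein {a : ℝ} (ha : 0 < a) (p : Polynomial ℝ) :
    Ig a (X * p) = a⁻¹ * Ig a (derivative p) := by
  have ha' : a ≠ 0 := ha.ne'
  have hu : ∀ x : ℝ, HasDerivAt (fun y => p.eval y) ((derivative p).eval x) x :=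
    fun x => p.hasDerivAt x
  have hv : ∀ x : ℝ, HasDerivAt (fun y : ℝ => -a⁻¹ * Real.exp (-(a * y ^ 2) / 2))
      (x * Real.exp (-(a * x ^ 2) / 2)) x := by
    intro x
    have h1 : HasDerivAt (fun y : ℝ => -(a * y ^ 2) / 2) (-(a * x)) x := by
      have h0 : HasDerivAt (fun y : ℝ => y ^ 2) (2 * x) x := by
        simpa using hasDerivAt_pow 2 x
      have := ((h0.const_mul a).neg).div_const 2
      refine this.congr_deriv ?_
      ring
    have h2 := (h1.exp).const_mul (-a⁻¹)
    refine h2.congr_deriv ?_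
    field_simp
  have huv' : Integrable ((fun y => p.eval y) * (fun x : ℝ => x * Real.exp (-(a * x ^ 2) / 2))) := by
    apply (integrable_poly_gauss ha (X * p)).congr
    exact Filter.Eventually.of_forall fun x => by simp [Pi.mul_apply]; ring
  have hu'v : Integrable ((fun y => (derivative p).eval y) *
      (fun x : ℝ => -a⁻¹ * Real.exp (-(a * x ^ 2) / 2))) := by
    apply ((integrable_poly_gauss ha (derivative p)).const_mul (-a⁻¹)).congr
    exact Filter.Eventually.of_forall fun x => by simp [Pi.mul_apply]; ring
  have huv : Integrable ((fun y => p.eval y) *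
      (fun x : ℝ => -a⁻¹ * Real.exp (-(a * x ^ 2) / 2))) := by
    apply ((integrable_poly_gauss ha p).const_mul (-a⁻¹)).congr
    exact Filter.Eventually.of_forall fun x => by simp [Pi.mul_apply]; ring
  have key := integral_mul_deriv_eq_deriv_mul_of_integrable (fun x _ => hu x) (fun x _ => hv x) huv' hu'v huv
  calc Ig a (X * p) = ∫ x : ℝ, p.eval x * (x * Real.exp (-(a * x ^ 2) / 2)) := by
        rw [Ig]; congr 1; funext x; simp; ring
    _ = - ∫ x : ℝ, (derivative p).eval x * (-a⁻¹ * Real.exp (-(a * x ^ 2) / 2)) := key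
    _ = a⁻¹ * Ig a (derivative p) := by
        rw [Ig, ← integral_neg, ← MeasureTheory.integral_const_mul]
        congr 1; funext x; ring

/-- Hermite polynomial rescaled. -/
noncomputable def QR (c : ℝ) (n : ℕ) : Polynomial ℝ := (PR n).comp (C c * X)

lemma QR_zero (c : ℝ) : QR c 0 = 1 := by simp [QR, PR_zero]
lemma QR_one (c : ℝ) : QR c 1 = C c * X := by simp [QR, PR_one]
lemma QR_eval (c : ℝ) (n : ℕ) (x : ℝ) : (QR c n).eval x = (PR n).eval (c * x) := by
  simp [QR, eval_comp]

lemma natCast_poly (n : ℕ) : ((n : Polynomial ℝ)) = C (n : ℝ) := by simp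

lemma QR_succ_succ (c : ℝ) (n : ℕ) :
    QR c (n+2) = C c * (X * QR c (n+1)) - C ((n:ℝ)+1) * QR c n := by
  rw [QR, PR_succ (n+1), derivative_PR n, sub_comp, mul_comp, X_comp, mul_comp]
  rw [natCast_poly]
  simp [QR]
  ring

lemma derivative_QR (c : ℝ) (n : ℕ) :
    derivative (QR c (n+1)) = C c * (C ((n:ℝ)+1) * QR c n) := by
  rw [QR, Polynomial.derivative_comp, derivative_PR n, derivative_mul, derivative_C, derivative_X]
  simp only [natCast_poly, mul_comp, C_comp, add_comp, one_comp, QR]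
  rw [map_add, map_one]
  ring

lemma Ig_QR_rec {a : ℝ} (ha : 0 < a) (c : ℝ) (n : ℕ) :
    Ig a (QR c (n+2)) = ((n:ℝ)+1) * (c^2/a - 1) * Ig a (QR c n) := by
  rw [QR_succ_succ, Ig_sub ha, Ig_C_mul, Ig_C_mul, Ig_stein ha, derivative_QR, Ig_C_mul, Ig_C_mul]
  field_simp

lemma Ig_QR_odd {a : ℝ} (ha : 0 < a) (c : ℝ) (m : ℕ) :
    Ig a (QR c (2*m+1)) = 0 := by
  induction m with
  | zero =>
    have h1 : QR c 1 = C c * (X * 1) := by rw [QR_one]; ring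
    rw [show 2*0+1 = 1 by norm_num, h1, Ig_C_mul, Ig_stein ha]
    simp [Ig_zero]
  | succ m ih =>
    have : 2*(m+1)+1 = (2*m+1)+2 := by ring
    rw [this, Ig_QR_rec ha, ih, mul_zero]

lemma Ig_one {a : ℝ} (ha : 0 < a) : Ig a 1 = Real.sqrt (2*Real.pi/a) := by
  have h2 : 0 < a/2 := by positivity
  have := integral_gaussian (a/2)
  rw [Ig]
  have heq : (fun x : ℝ => eval x 1 * Real.exp (-(a * x ^ 2) / 2))
      = fun x : ℝ => Real.exp (-(a/2) * x ^ 2) := by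
    funext x; simp; congr 1; ring
  rw [heq, this]
  congr 1
  field_simp

lemma Ig_QR_even {a : ℝ} (ha : 0 < a) (c : ℝ) (m : ℕ) :
    Ig a (QR c (2*m)) = Real.sqrt (2*Real.pi/a) *
      (((2*m).factorial : ℝ) / (2^m * (m.factorial : ℝ))) * (c^2/a - 1)^m := by
  induction m with
  | zero => simp [QR_zero, Ig_one ha]
  | succ m ih =>
    have h2 : 2*(m+1) = (2*m)+2 := by ring
    rw [h2, Ig_QR_rec ha, ih]
    have hfac : (((2*m+2).factorial : ℝ)) = (2*(m:ℝ)+2) * (2*(m:ℝ)+1) * ((2*m).factorial : ℝ) := by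
      rw [show 2*m+2 = (2*m+1)+1 from by ring, Nat.factorial_succ, Nat.factorial_succ]
      push_cast
      ring
    have hfac2 : ((m+1).factorial : ℝ) = (m+1) * (m.factorial : ℝ) := by
      rw [Nat.factorial_succ]; push_cast; ring
    rw [hfac, hfac2]
    have hm : (m.factorial : ℝ) ≠ 0 := Nat.cast_ne_zero.mpr m.factorial_ne_zero
    have hm1 : ((m:ℝ)+1) ≠ 0 := by positivity
    have h2m : (2:ℝ)^m ≠ 0 := by positivity
    push_cast
    field_simp
    rw [pow_succ ((c ^ 2 - a) / a), pow_succ (2:ℝ)]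
    field_simp

lemma integral_gaussianReal01 (g : ℝ → ℝ) :
    ∫ x, g x ∂(gaussianReal 0 1) = ∫ x, g x * gaussianPDFReal 0 1 x := by
  rw [gaussianReal_of_var_ne_zero _ one_ne_zero]
  have hmeas : Measurable (fun x => (gaussianPDFReal 0 1 x).toNNReal) :=
    (measurable_gaussianPDFReal 0 1).real_toNNReal
  have : (gaussianPDF 0 1) = fun x => ((gaussianPDFReal 0 1 x).toNNReal : ENNReal) := by
    funext x; rw [gaussianPDF]; rfl
  rw [this, integral_withDensity_eq_integral_smul hmeas g]
  congr 1; funext x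
  rw [NNReal.smul_def, smul_eq_mul, Real.coe_toNNReal _ (gaussianPDFReal_nonneg 0 1 x)]
  ring

lemma gaussianPDFReal01 (x : ℝ) :
    gaussianPDFReal 0 1 x = (Real.sqrt (2 * Real.pi))⁻¹ * Real.exp (-(1 * x ^ 2) / 2) := by
  rw [gaussianPDFReal]
  norm_num

end Aux

theorem stmt_0 (ℓ α : ℝ) (hℓ : 0 < ℓ) (hα : 0 < α)
    (ε β δ2 : ℝ)
    (hε : ε = 1 / (Real.sqrt 2 * ℓ))
    (hβ : β = (1 + (2 * ε / α) ^ 2) ^ ((1 : ℝ) / 4))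
    (hδ2 : δ2 = α ^ 2 * (β ^ 2 - 1) / 2)
    (φ : ℕ → ℝ → ℝ)
    (hφ : ∀ n x, φ n x = Real.sqrt (β / (n.factorial : ℝ)) * Real.exp (-δ2 * x ^ 2) *
      H n (Real.sqrt 2 * α * β * x))
    (m : ℕ) :
    (∫ x, φ (2 * m + 1) x ∂stdGauss) = 0 ∧
    (∫ x, φ (2 * m) x ∂stdGauss) =
      Real.sqrt (β / (1 + 2 * δ2)) * (Real.sqrt (((2 * m).factorial : ℝ)) / (2 ^ m * (m.factorial : ℝ))) *
        (2 * α ^ 2 * β ^ 2 / (1 + 2 * δ2) - 1) ^ m := by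
  set c : ℝ := Real.sqrt 2 * α * β with hc
  have hβpos : 0 < β := by
    rw [hβ]
    exact Real.rpow_pos_of_pos (by positivity) _
  have hβ1 : 1 ≤ β := by
    rw [hβ]
    apply Real.one_le_rpow (by nlinarith [sq_nonneg (2 * ε / α)]) (by norm_num)
  have hδ2nn : 0 ≤ δ2 := by
    have hb2 : 1 ≤ β ^ 2 := by nlinarith
    rw [hδ2]
    have h0 : (0:ℝ) ≤ β ^ 2 - 1 := by linarith
    positivity
  have ha : 0 < 1 + 2 * δ2 := by linarith
  have hmain : ∀ n : ℕ, (∫ x, φ n x ∂stdGauss) =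
      (Real.sqrt (β / (n.factorial : ℝ)) * (Real.sqrt (2 * Real.pi))⁻¹) *
        Ig (1 + 2 * δ2) (QR c n) := by
    intro n
    rw [stdGauss, integral_gaussianReal01, Ig, ← MeasureTheory.integral_const_mul]
    congr 1; funext x
    rw [hφ, H, PR_aeval, gaussianPDFReal01, QR_eval]
    have hexp : Real.exp (-δ2 * x ^ 2) * Real.exp (-(1 * x ^ 2) / 2)
        = Real.exp (-((1 + 2 * δ2) * x ^ 2) / 2) := by
      rw [← Real.exp_add]; congr 1; ring
    linear_combination (Real.sqrt (β / (n.factorial : ℝ)) * (Real.sqrt (2 * Real.pi))⁻¹ *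
      (PR n).eval (c * x)) * hexp
  constructor
  · rw [hmain, Ig_QR_odd ha, mul_zero]
  · rw [hmain, Ig_QR_even ha]
    have hc2 : c ^ 2 = 2 * α ^ 2 * β ^ 2 := by
      rw [hc, mul_pow, mul_pow, Real.sq_sqrt (by norm_num : (0:ℝ) ≤ 2)]
    rw [hc2]
    have hS : (0:ℝ) < 2 * Real.pi := by positivity
    have hF : (0:ℝ) < ((2 * m).factorial : ℝ) := by exact_mod_cast (2*m).factorial_pos
    have h1 : Real.sqrt (β / ((2*m).factorial : ℝ)) = Real.sqrt β / Real.sqrt ((2*m).factorial : ℝ) :=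
      Real.sqrt_div hβpos.le _
    have h2 : Real.sqrt (2 * Real.pi / (1 + 2 * δ2)) = Real.sqrt (2 * Real.pi) / Real.sqrt (1 + 2 * δ2) :=
      Real.sqrt_div hS.le _
    have h3 : Real.sqrt (β / (1 + 2 * δ2)) = Real.sqrt β / Real.sqrt (1 + 2 * δ2) :=
      Real.sqrt_div hβpos.le _
    have h4 : Real.sqrt ((2*m).factorial : ℝ) * Real.sqrt ((2*m).factorial : ℝ)
        = ((2*m).factorial : ℝ) := Real.mul_self_sqrt hF.le
    have hFne : Real.sqrt ((2*m).factorial : ℝ) ≠ 0 := by positivity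
    have hane : Real.sqrt (1 + 2 * δ2) ≠ 0 := by positivity
    have hSne : Real.sqrt (2 * Real.pi) ≠ 0 := by positivity
    have hmf : (m.factorial : ℝ) ≠ 0 := Nat.cast_ne_zero.mpr m.factorial_ne_zero
    have h2m : (2:ℝ)^m ≠ 0 := by positivity
    have h5 : ((2*m).factorial : ℝ) = Real.sqrt ((2*m).factorial : ℝ) ^ 2 :=
      (Real.sq_sqrt hF.le).symm
    have hgoal : Real.sqrt (β / ((2*m).factorial : ℝ)) * (Real.sqrt (2 * Real.pi))⁻¹ *
        (Real.sqrt (2 * Real.pi / (1 + 2 * δ2)) *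
          (((2*m).factorial : ℝ) / (2^m * (m.factorial : ℝ))) *
          (2 * α ^ 2 * β ^ 2 / (1 + 2 * δ2) - 1) ^ m)
        = (Real.sqrt (β / ((2*m).factorial : ℝ)) * (Real.sqrt (2 * Real.pi))⁻¹ *
          (Real.sqrt (2 * Real.pi / (1 + 2 * δ2)) *
            (((2*m).factorial : ℝ) / (2^m * (m.factorial : ℝ))))) *
          (2 * α ^ 2 * β ^ 2 / (1 + 2 * δ2) - 1) ^ m := by ring
    rw [hgoal]
    congr 1
    rw [h1, h2, h3, h5]
    field_simp
    rw [Real.sqrt_sq (Real.sqrt_nonneg _)]
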